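/- Let T ∈ (0,∞) be finite and let A, B : [0,T) → ℝ be differentiable with A(t) > 0 and B(t) > 0, satisfying A'(t) = -4(A(t)/B(t))² and B'(t) = -8 + 4·A(t)/B(t) on [0,T), and suppose A(t)/B(t) → 1 as t → T⁻. If 1/2 ≤ A(0)/B(0) < 1 or A(0)/B(0) > 1, then the function φ(t) := (A(t)/B(t))·|1 - A(t)/B(t)| is strictly decreasing on [0,T) and φ(t) → 0 as t → T⁻. -/

import Mathlib

open Filter Set

/-- Ricci flow ODE on SU(2) with `B = C`, case `1/2 ≤ A₀/B₀ < 1` or `A₀/B₀ > 1`: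
the function `φ = (A/B)·|1 - A/B|` is strictly decreasing on `[0,T)` and `φ → 0`
as `t → T⁻`. -/
theorem su2_L1_norm_monotone (T : ℝ) (hT : 0 < T) (A B : ℝ → ℝ)
    (hA : ∀ t ∈ Set.Ico (0 : ℝ) T, 0 < A t)
    (hB : ∀ t ∈ Set.Ico (0 : ℝ) T, 0 < B t)
    (hA' : ∀ t ∈ Set.Ico (0 : ℝ) T, HasDerivAt A (-4 * (A t / B t) ^ 2) t)
    (hB' : ∀ t ∈ Set.Ico (0 : ℝ) T, HasDerivAt B (-8 + 4 * (A t / B t)) t)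
    (hlim : Tendsto (fun t => A t / B t) (nhdsWithin T (Set.Iio T)) (nhds 1))
    (h0 : (1 / 2 ≤ A 0 / B 0 ∧ A 0 / B 0 < 1) ∨ 1 < A 0 / B 0) :
    StrictAntiOn (fun t => (A t / B t) * |1 - A t / B t|) (Set.Ico 0 T) ∧
    Tendsto (fun t => (A t / B t) * |1 - A t / B t|)
      (nhdsWithin T (Set.Iio T)) (nhds 0) := by
  have hBne : ∀ t ∈ Set.Ico (0:ℝ) T, B t ≠ 0 := fun t ht => (hB t ht).ne'
  have hx' : ∀ t ∈ Set.Ico (0:ℝ) T, HasDerivAt (fun t => A t / B t)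
      (8 * (A t / B t) * (1 - A t / B t) / B t) t := by
    intro t ht
    have hb := hBne t ht
    have h := (hA' t ht).div (hB' t ht) hb
    refine h.congr_deriv ?_
    field_simp
    ring
  have hxpos : ∀ t ∈ Set.Ico (0:ℝ) T, 0 < A t / B t := fun t ht => div_pos (hA t ht) (hB t ht)
  have hxcont : ContinuousOn (fun t => A t / B t) (Set.Ico 0 T) :=
    fun t ht => (hx' t ht).continuousAt.continuousWithinAt
  have hy' : ∀ t ∈ Set.Ico (0:ℝ) T, HasDerivAt (fun t => (A t / B t) * (1 - A t / B t))
      ((8 * (1 - 2 * (A t / B t)) / B t) * ((A t / B t) * (1 - A t / B t))) t := by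
    intro t ht
    have hb := hBne t ht
    have h := (hx' t ht).mul ((hasDerivAt_const t (1:ℝ)).sub (hx' t ht))
    refine h.congr_deriv ?_
    simp only [Pi.sub_apply]
    field_simp
    ring
  have hycont : ContinuousOn (fun t => (A t / B t) * (1 - A t / B t)) (Set.Ico 0 T) :=
    fun t ht => (hy' t ht).continuousAt.continuousWithinAt
  have hT0 : (0:ℝ) ∈ Set.Ico (0:ℝ) T := ⟨le_refl _, hT⟩
  have hy0ne : (A 0 / B 0) * (1 - A 0 / B 0) ≠ 0 := by
    rcases h0 with ⟨h1, h2⟩ | h1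
    · exact ne_of_gt (mul_pos (lt_of_lt_of_le (by norm_num) h1) (by linarith))
    · exact ne_of_lt (mul_neg_of_pos_of_neg (by linarith) (by linarith))
  -- y never vanishes on [0, T)
  have hne : ∀ t ∈ Set.Ico (0:ℝ) T, (A t / B t) * (1 - A t / B t) ≠ 0 := by
    intro t₁ ht₁ hzero
    rcases eq_or_lt_of_le ht₁.1 with h | h
    · rw [← h] at hzero; exact hy0ne hzero
    · have hsub : Set.Icc (0:ℝ) t₁ ⊆ Set.Ico 0 T :=
        fun s hs => ⟨hs.1, lt_of_le_of_lt hs.2 ht₁.2⟩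
      have hBcont : ContinuousOn B (Set.Icc 0 t₁) :=
        fun s hs => (hB' s (hsub hs)).continuousAt.continuousWithinAt
      have hccont : ContinuousOn (fun t => 8 * (1 - 2 * (A t / B t)) / B t) (Set.Icc 0 t₁) :=
        (continuousOn_const.mul (continuousOn_const.sub
          (continuousOn_const.mul (hxcont.mono hsub)))).div hBcont
          (fun s hs => hBne s (hsub hs))
      obtain ⟨K, hK⟩ := isCompact_Icc.exists_bound_of_continuousOn hccont
      have hf' : ∀ s ∈ Set.Ico (0:ℝ) t₁,
          HasDerivAt (fun s => (A (t₁ - s) / B (t₁ - s)) * (1 - A (t₁ - s) / B (t₁ - s)))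
          (-((8 * (1 - 2 * (A (t₁ - s) / B (t₁ - s))) / B (t₁ - s)) *
            ((A (t₁ - s) / B (t₁ - s)) * (1 - A (t₁ - s) / B (t₁ - s))))) s := by
        intro s hs
        have hmem : t₁ - s ∈ Set.Ico (0:ℝ) T :=
          hsub ⟨by linarith [hs.2], by linarith [hs.1]⟩
        have h1 : HasDerivAt (fun u : ℝ => t₁ - u) (-1) s := (hasDerivAt_id s).const_sub t₁
        have h2 := (hy' (t₁ - s) hmem).comp s h1
        refine h2.congr_deriv ?_
        ring
      have hmaps : ∀ s ∈ Set.Icc (0:ℝ) t₁, t₁ - s ∈ Set.Ico (0:ℝ) T :=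
        fun s hs => hsub ⟨by linarith [hs.2], by linarith [hs.1]⟩
      have hfcont : ContinuousOn
          (fun s => (A (t₁ - s) / B (t₁ - s)) * (1 - A (t₁ - s) / B (t₁ - s)))
          (Set.Icc 0 t₁) := by
        exact hycont.comp ((continuous_const.sub continuous_id).continuousOn)
          (fun s hs => hmaps s hs)
      have key := norm_le_gronwallBound_of_norm_deriv_right_le (δ := 0) (K := K) (ε := 0)
        hfcont (fun s hs => (hf' s hs).hasDerivWithinAt)
        (by simp [hzero])
        (fun s hs => by
          have hKs := hK (t₁ - s) ⟨by linarith [hs.2], by linarith [hs.1]⟩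
          rw [norm_neg, norm_mul]
          have := mul_le_mul_of_nonneg_right hKs
            (norm_nonneg ((A (t₁ - s) / B (t₁ - s)) * (1 - A (t₁ - s) / B (t₁ - s))))
          simpa using this)
      have hfin := key t₁ (Set.right_mem_Icc.2 (le_of_lt h))
      simp only [gronwallBound_ε0, sub_self, zero_mul] at hfin
      exact hy0ne (norm_le_zero_iff.mp hfin)
  -- the limit statement (common to both cases)
  have hlim0 : Tendsto (fun t => (A t / B t) * |1 - A t / B t|)
      (nhdsWithin T (Set.Iio T)) (nhds 0) := by
    have h1 : Tendsto (fun t => (1:ℝ) - A t / B t) (nhdsWithin T (Set.Iio T))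
        (nhds (1 - 1)) := (tendsto_const_nhds (x := (1:ℝ))).sub hlim
    have := hlim.mul h1.abs
    simpa using this
  have hφcont : ContinuousOn (fun t => (A t / B t) * |1 - A t / B t|) (Set.Ico 0 T) :=
    hxcont.mul (continuousOn_const.sub hxcont).abs
  refine ⟨?_, hlim0⟩
  rcases h0 with ⟨h1, h2⟩ | h1
  · -- case 1/2 ≤ x0 < 1
    have hy0pos : 0 < (A 0 / B 0) * (1 - A 0 / B 0) :=
      mul_pos (lt_of_lt_of_le (by norm_num) h1) (by linarith)
    have hypos : ∀ t ∈ Set.Ico (0:ℝ) T, 0 < (A t / B t) * (1 - A t / B t) := by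
      intro t ht
      rcases lt_trichotomy ((A t / B t) * (1 - A t / B t)) 0 with hlt | heq | hgt
      · exfalso
        have hIcc : Set.Icc (0:ℝ) t ⊆ Set.Ico 0 T :=
          fun s hs => ⟨hs.1, lt_of_le_of_lt hs.2 ht.2⟩
        have hcont' : ContinuousOn (fun t => (A t / B t) * (1 - A t / B t))
            (Set.uIcc 0 t) := by
          rw [Set.uIcc_of_le ht.1]; exact hycont.mono hIcc
        have h0mem : (0:ℝ) ∈ Set.uIcc ((A 0 / B 0) * (1 - A 0 / B 0))
            ((A t / B t) * (1 - A t / B t)) := by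
          rw [Set.mem_uIcc]; right; exact ⟨le_of_lt hlt, le_of_lt hy0pos⟩
        obtain ⟨s, hs, hys⟩ := intermediate_value_uIcc hcont' h0mem
        rw [Set.uIcc_of_le ht.1] at hs
        exact hne s (hIcc hs) hys
      · exact absurd heq (hne t ht)
      · exact hgt
    have hxlt1 : ∀ t ∈ Set.Ico (0:ℝ) T, A t / B t < 1 := by
      intro t ht
      have := hypos t ht
      have hxp := hxpos t ht
      nlinarith
    have hmono : StrictMonoOn (fun t => A t / B t) (Set.Ico 0 T) := by
      apply strictMonoOn_of_deriv_pos (convex_Ico 0 T) hxcont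
      intro t ht
      rw [interior_Ico] at ht
      have ht' : t ∈ Set.Ico (0:ℝ) T := ⟨le_of_lt ht.1, ht.2⟩
      rw [(hx' t ht').deriv]
      have hxp := hxpos t ht'
      have hx1 := hxlt1 t ht'
      have hBp := hB t ht'
      exact div_pos (by nlinarith) hBp
    apply strictAntiOn_of_deriv_neg (convex_Ico 0 T) hφcont
    intro t ht
    rw [interior_Ico] at ht
    have ht' : t ∈ Set.Ico (0:ℝ) T := ⟨le_of_lt ht.1, ht.2⟩
    have hev : (fun s => (A s / B s) * |1 - A s / B s|) =ᶠ[nhds t]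
        (fun s => (A s / B s) * (1 - A s / B s)) := by
      filter_upwards [Ioo_mem_nhds ht.1 ht.2] with s hs
      rw [abs_of_pos (sub_pos.2 (hxlt1 s ⟨le_of_lt hs.1, hs.2⟩))]
    have hdφ := (hy' t ht').congr_of_eventuallyEq hev
    rw [hdφ.deriv]
    have hx12 : 1/2 < A t / B t := lt_of_le_of_lt h1 (hmono hT0 ht' ht.1)
    have hBp := hB t ht'
    have hyp := hypos t ht'
    apply mul_neg_of_neg_of_pos _ hyp
    apply div_neg_of_neg_of_pos _ hBp
    nlinarith
  · -- case x0 > 1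
    have hy0neg : (A 0 / B 0) * (1 - A 0 / B 0) < 0 :=
      mul_neg_of_pos_of_neg (by linarith) (by linarith)
    have hyneg : ∀ t ∈ Set.Ico (0:ℝ) T, (A t / B t) * (1 - A t / B t) < 0 := by
      intro t ht
      rcases lt_trichotomy ((A t / B t) * (1 - A t / B t)) 0 with hlt | heq | hgt
      · exact hlt
      · exact absurd heq (hne t ht)
      · exfalso
        have hIcc : Set.Icc (0:ℝ) t ⊆ Set.Ico 0 T :=
          fun s hs => ⟨hs.1, lt_of_le_of_lt hs.2 ht.2⟩
        have hcont' : ContinuousOn (fun t => (A t / B t) * (1 - A t / B t))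
            (Set.uIcc 0 t) := by
          rw [Set.uIcc_of_le ht.1]; exact hycont.mono hIcc
        have h0mem : (0:ℝ) ∈ Set.uIcc ((A 0 / B 0) * (1 - A 0 / B 0))
            ((A t / B t) * (1 - A t / B t)) := by
          rw [Set.mem_uIcc]; left; exact ⟨le_of_lt hy0neg, le_of_lt hgt⟩
        obtain ⟨s, hs, hys⟩ := intermediate_value_uIcc hcont' h0mem
        rw [Set.uIcc_of_le ht.1] at hs
        exact hne s (hIcc hs) hys
    have hxgt1 : ∀ t ∈ Set.Ico (0:ℝ) T, 1 < A t / B t := by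
      intro t ht
      have := hyneg t ht
      have hxp := hxpos t ht
      nlinarith
    apply strictAntiOn_of_deriv_neg (convex_Ico 0 T) hφcont
    intro t ht
    rw [interior_Ico] at ht
    have ht' : t ∈ Set.Ico (0:ℝ) T := ⟨le_of_lt ht.1, ht.2⟩
    have hev : (fun s => (A s / B s) * |1 - A s / B s|) =ᶠ[nhds t]
        (fun s => -((A s / B s) * (1 - A s / B s))) := by
      filter_upwards [Ioo_mem_nhds ht.1 ht.2] with s hs
      rw [abs_of_neg (sub_neg.2 (hxgt1 s ⟨le_of_lt hs.1, hs.2⟩))]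
      ring
    have hdφ := ((hy' t ht').neg).congr_of_eventuallyEq hev
    rw [hdφ.deriv]
    have hx1 := hxgt1 t ht'
    have hBp := hB t ht'
    have hyn := hyneg t ht'
    have hcneg : 8 * (1 - 2 * (A t / B t)) / B t < 0 :=
      div_neg_of_neg_of_pos (by nlinarith) hBp
    have hpos := mul_pos_of_neg_of_neg hcneg hyn
    linarith
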